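/- (Theorem 2(ii)) Let A ⊆ ℝⁿ be a bounded closed set with 0 ∈ A ⊆ B₁, Ω := ℝⁿ \ A, and let g : ∂Ω → ℝ be continuous. For any a ∈ ℝⁿ with |a| > 0, there exists a function u, continuous on the closure of Ω and infinity harmonic in Ω, such that u = g on ∂Ω and the function x ↦ u(x) − a·x attains both its maximum and its minimum over the closure of Ω on ∂Ω; that is, with c⁺ := max_{∂Ω}(g(x) − a·x) and c⁻ := min_{∂Ω}(g(x) − a·x), one has c⁻ + a·x ≤ u(x) ≤ c⁺ + a·x in Ω. -/

import Mathlib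

open Metric Set Filter Bornology Topology
open scoped RealInnerProductSpace

noncomputable section

/-- Euclidean space ℝⁿ. -/
abbrev Euc (n : ℕ) := EuclideanSpace ℝ (Fin n)

/-- Comparison with cones from above (infinity subharmonic). -/
def CmpAbove {n : ℕ} (Ω : Set (Euc n)) (u : Euc n → ℝ) : Prop :=
  ∀ V : Set (Euc n), IsOpen V → IsBounded V → closure V ⊆ Ω →
    ∀ (x₀ : Euc n) (a b : ℝ),
      (∀ x ∈ frontier (V \ {x₀}), u x ≤ a * ‖x - x₀‖ + b) →
      ∀ x ∈ V, u x ≤ a * ‖x - x₀‖ + b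

/-- Comparison with cones from below (infinity superharmonic). -/
def CmpBelow {n : ℕ} (Ω : Set (Euc n)) (u : Euc n → ℝ) : Prop :=
  ∀ V : Set (Euc n), IsOpen V → IsBounded V → closure V ⊆ Ω →
    ∀ (x₀ : Euc n) (a b : ℝ),
      (∀ x ∈ frontier (V \ {x₀}), a * ‖x - x₀‖ + b ≤ u x) →
      ∀ x ∈ V, a * ‖x - x₀‖ + b ≤ u x

/-- Infinity harmonic = comparison with cones from both sides. -/
def InfHarmonic {n : ℕ} (Ω : Set (Euc n)) (u : Euc n → ℝ) : Prop :=
  CmpAbove Ω u ∧ CmpBelow Ω u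

/-- m⁺ = max of u on ∂Ω. -/
def mP {n : ℕ} (Ω : Set (Euc n)) (u : Euc n → ℝ) : ℝ := sSup (u '' frontier Ω)

/-- m⁻ = min of u on ∂Ω. -/
def mM {n : ℕ} (Ω : Set (Euc n)) (u : Euc n → ℝ) : ℝ := sInf (u '' frontier Ω)

/-- S⁺_r := (max(max_{∂B_r} u, m⁺) − m⁺)/r. -/
def SP {n : ℕ} (Ω : Set (Euc n)) (u : Euc n → ℝ) (r : ℝ) : ℝ :=
  (max (sSup (u '' sphere (0 : Euc n) r)) (mP Ω u) - mP Ω u) / r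

/-- S⁻_r := (m⁻ − min(min_{∂B_r} u, m⁻))/r. -/
def SM {n : ℕ} (Ω : Set (Euc n)) (u : Euc n → ℝ) (r : ℝ) : ℝ :=
  (mM Ω u - min (sInf (u '' sphere (0 : Euc n) r)) (mM Ω u)) / r

/-- Lip(u, S) := sup_{x≠y ∈ S} |u(x) − u(y)|/|x − y|. -/
def lipOn {n : ℕ} (u : Euc n → ℝ) (S : Set (Euc n)) : ℝ :=
  sSup ((fun p : Euc n × Euc n => |u p.1 - u p.2| / ‖p.1 - p.2‖) ''
    {p : Euc n × Euc n | p.1 ∈ S ∧ p.2 ∈ S ∧ p.1 ≠ p.2})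

variable {E : Type*} [NormedAddCommGroup E] [NormedSpace ℝ E]

/-- frontier of an open set minus a point. -/
lemma frontier_diff_singleton [Nontrivial E] {W : Set E} (hW : IsOpen W) (x₀ : E) :
    frontier (W \ {x₀}) = closure W \ (W \ {x₀}) := by
  have hcl : closure (W \ {x₀}) = closure W := by
    apply Subset.antisymm (closure_mono diff_subset)
    have hsub : W ⊆ closure (W \ {x₀}) := by
      intro w hw
      rcases eq_or_ne w x₀ with rfl | hne
      · rw [mem_closure_iff_nhds]
        intro U hU
        have hUW : IsOpen (interior U ∩ W) := isOpen_interior.inter hW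
        have hne' : (interior U ∩ W).Nonempty := ⟨w, mem_interior_iff_mem_nhds.2 hU, hw⟩
        obtain ⟨q, hq1, hq2⟩ := (dense_compl_singleton w).inter_open_nonempty _ hUW hne'
        exact ⟨q, interior_subset hq1.1, hq1.2, hq2⟩
      · exact subset_closure ⟨hw, hne⟩
    calc closure W ⊆ closure (closure (W \ {x₀})) := closure_mono hsub
      _ = _ := closure_closure
  rw [(hW.sdiff isClosed_singleton).frontier_eq, hcl]

lemma mem_frontier_diff_singleton_of_frontier [Nontrivial E] {W : Set E} (hW : IsOpen W)
    (x₀ : E) {q : E} (hq : q ∈ frontier W) : q ∈ frontier (W \ {x₀}) := by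
  rw [frontier_diff_singleton hW x₀]
  rw [hW.frontier_eq] at hq
  exact ⟨hq.1, fun h => hq.2 h.1⟩

lemma mem_frontier_diff_singleton_self [Nontrivial E] {W : Set E} (hW : IsOpen W)
    {x₀ : E} (hx₀ : x₀ ∈ W) : x₀ ∈ frontier (W \ {x₀}) := by
  rw [frontier_diff_singleton hW x₀]
  exact ⟨subset_closure hx₀, fun h => h.2 rfl⟩

/-- exit point along a ray from a point of a bounded set. -/
lemma exit_pos {S : Set E} (hSo : IsOpen S) (hSb : IsBounded S) {x : E} (hx : x ∈ S) {d : E} (hd : d ≠ 0) :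
    ∃ T : ℝ, 0 < T ∧ x + T • d ∉ S ∧ x + T • d ∈ closure S ∧
      ∀ t : ℝ, 0 ≤ t → t < T → x + t • d ∈ S := by
  obtain ⟨R0, hR0'⟩ := hSb.subset_ball 0
  have hR : S ⊆ ball 0 (max R0 0 + 1) := hR0'.trans (ball_subset_ball (by
    have := le_max_left R0 0; linarith))
  set R := max R0 0 + 1 with hRdef
  have hRpos : (0:ℝ) < R := by positivity
  set B : Set ℝ := {t : ℝ | 0 ≤ t ∧ x + t • d ∉ S} with hB
  have hBc : IsClosed B := by
    have : B = Ici (0:ℝ) ∩ (fun t : ℝ => x + t • d) ⁻¹' Sᶜ := by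
      ext t; simp [hB, mem_Ici, and_comm]
    rw [this]
    exact isClosed_Ici.inter (hSo.isClosed_compl.preimage
      (continuous_const.add (continuous_id.smul continuous_const)))
  have hBne : B.Nonempty := by
    refine ⟨(R + ‖x‖ + 1) / ‖d‖, ?_, ?_⟩
    · positivity
    · intro hmem
      have := hR hmem
      rw [mem_ball, dist_zero_right] at this
      have h1 : ‖((R + ‖x‖ + 1) / ‖d‖) • d‖ ≤ ‖x + ((R + ‖x‖ + 1) / ‖d‖) • d‖ + ‖x‖ := by
        have := norm_add_le (x + ((R + ‖x‖ + 1) / ‖d‖) • d) (-x)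
        simpa [add_assoc] using this
      rw [norm_smul, Real.norm_eq_abs, abs_of_nonneg (by positivity),
        div_mul_cancel₀ _ (norm_ne_zero_iff.2 hd)] at h1
      linarith
  have hBbd : BddBelow B := ⟨0, fun t ht => ht.1⟩
  set T := sInf B with hT
  have hTB : T ∈ B := hBc.csInf_mem hBne hBbd
  have hTpos : 0 < T := by
    rcases lt_or_eq_of_le hTB.1 with h | h
    · exact h
    · exfalso; apply hTB.2; rw [← h]; simpa using hx
  have hseg : ∀ t : ℝ, 0 ≤ t → t < T → x + t • d ∈ S := by
    intro t ht htT
    by_contra hns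
    exact absurd (csInf_le hBbd ⟨ht, hns⟩) (not_le.2 htT)
  refine ⟨T, hTpos, hTB.2, ?_, hseg⟩
  have : Tendsto (fun t : ℝ => x + t • d) (𝓝[<] T) (𝓝 (x + T • d)) := by
    exact ((continuous_const.add (continuous_id.smul continuous_const)).tendsto T).mono_left
      nhdsWithin_le_nhds
  refine mem_closure_of_tendsto this ?_
  filter_upwards [Ioo_mem_nhdsLT hTpos] with t ht
  exact hseg t (le_of_lt ht.1) ht.2


/-- walking from `x ∈ S` toward `v ∉ S` we first leave `S` at a frontier point `q`,
with `‖x - q‖ + ‖q - v‖ = ‖x - v‖`. -/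
lemma walk_exit {S : Set E} (hSo : IsOpen S) {x v : E} (hx : x ∈ S) (hv : v ∉ S) :
    ∃ q : E, q ∈ closure S ∧ q ∉ S ∧ ‖x - q‖ + ‖q - v‖ = ‖x - v‖ := by
  set B : Set ℝ := {t : ℝ | t ∈ Icc (0:ℝ) 1 ∧ x + t • (v - x) ∉ S} with hB
  have hBc : IsClosed B := by
    have : B = Icc (0:ℝ) 1 ∩ (fun t : ℝ => x + t • (v - x)) ⁻¹' Sᶜ := by
      ext t; simp [hB]
    rw [this]
    exact isClosed_Icc.inter (hSo.isClosed_compl.preimage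
      (continuous_const.add (continuous_id.smul continuous_const)))
  have hBne : B.Nonempty := ⟨1, ⟨by norm_num, by norm_num⟩, by simpa using hv⟩
  have hBbd : BddBelow B := ⟨0, fun t ht => ht.1.1⟩
  set T := sInf B with hT
  have hTB : T ∈ B := hBc.csInf_mem hBne hBbd
  have hTpos : 0 < T := by
    rcases lt_or_eq_of_le hTB.1.1 with h | h
    · exact h
    · exfalso; apply hTB.2; rw [← h]; simpa using hx
  have hseg : ∀ t : ℝ, 0 ≤ t → t < T → x + t • (v - x) ∈ S := by
    intro t ht htT
    by_contra hns
    have htle : t ≤ 1 := le_trans (le_of_lt htT) hTB.1.2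
    exact absurd (csInf_le hBbd ⟨⟨ht, htle⟩, hns⟩) (not_le.2 htT)
  refine ⟨x + T • (v - x), ?_, hTB.2, ?_⟩
  · have : Tendsto (fun t : ℝ => x + t • (v - x)) (𝓝[<] T) (𝓝 (x + T • (v - x))) :=
      ((continuous_const.add (continuous_id.smul continuous_const)).tendsto T).mono_left
        nhdsWithin_le_nhds
    refine mem_closure_of_tendsto this ?_
    filter_upwards [Ioo_mem_nhdsLT hTpos] with t ht
    exact hseg t (le_of_lt ht.1) ht.2
  · have h1 : x - (x + T • (v - x)) = (-T) • (v - x) := by module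
    have h2 : (x + T • (v - x)) - v = (T - 1) • (v - x) := by module
    rw [h1, h2, norm_smul, norm_smul, Real.norm_eq_abs, Real.norm_eq_abs,
      abs_of_nonpos (by linarith [hTB.1.2] : T - 1 ≤ 0), abs_neg, abs_of_nonneg (le_of_lt hTpos)]
    have : ‖x - v‖ = ‖v - x‖ := norm_sub_rev _ _
    rw [this]; ring

lemma convexOn_norm_affine (base dir : E) :
    ConvexOn ℝ Set.univ (fun t : ℝ => ‖base + t • dir‖) := by
  refine ⟨convex_univ, ?_⟩
  intro s _ t _ p q hp hq hpq
  have h : base + (p • s + q • t) • dir = p • (base + s • dir) + q • (base + t • dir) := by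
    have hb : base = (p + q) • base := by rw [hpq, one_smul]
    rw [smul_eq_mul, smul_eq_mul]
    nth_rewrite 1 [hb]
    module
  simp only [smul_eq_mul] at h ⊢
  rw [h]
  calc ‖p • (base + s • dir) + q • (base + t • dir)‖
      ≤ ‖p • (base + s • dir)‖ + ‖q • (base + t • dir)‖ := norm_add_le _ _
    _ = p * ‖base + s • dir‖ + q * ‖base + t • dir‖ := by
        rw [norm_smul, norm_smul, Real.norm_eq_abs, Real.norm_eq_abs,
          abs_of_nonneg hp, abs_of_nonneg hq]

lemma convexOn_affine (c₁ c₂ : ℝ) : ConvexOn ℝ Set.univ (fun t : ℝ => c₁ * t + c₂) := by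
  refine ⟨convex_univ, ?_⟩
  intro s _ t _ p q hp hq hpq
  simp only [smul_eq_mul]
  have hp1 : p = 1 - q := by linarith
  rw [hp1]; exact le_of_eq (by ring)

/-- main 1-d convexity exit principle -/
lemma le_zero_of_convex_line {S : Set E} (hSo : IsOpen S) (hSb : IsBounded S)
    {x v : E} (hx : x ∈ S) (hv : v ∉ S) {h : E → ℝ}
    (hfr : ∀ q, q ∈ closure S → q ∉ S → h q ≤ 0)
    (φ : ℝ → ℝ) (hφ : ConvexOn ℝ Set.univ φ)
    (heq : ∀ t : ℝ, -1 ≤ t → φ t = h (x + t • (x - v))) : h x ≤ 0 := by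
  have hd : x - v ≠ 0 := sub_ne_zero.2 (ne_of_mem_of_not_mem hx hv)
  obtain ⟨T₁, hT₁pos, hq₁ns, hq₁cl, _⟩ := exit_pos hSo hSb hx hd
  have hd' : -(x - v) ≠ 0 := neg_ne_zero.2 hd
  obtain ⟨T₂, hT₂pos, hq₂ns, hq₂cl, hseg₂⟩ := exit_pos hSo hSb hx hd'
  have hT₂le : T₂ ≤ 1 := by
    by_contra hgt
    apply hv
    have := hseg₂ 1 (by norm_num) (not_le.1 hgt)
    simpa using this
  have hrw : ∀ t : ℝ, x + t • (-(x - v)) = x + (-t) • (x - v) := by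
    intro t; rw [smul_neg, neg_smul]
  have e₁ : φ T₁ = h (x + T₁ • (x - v)) := heq T₁ (by linarith)
  have e₂ : φ (-T₂) = h (x + T₂ • (-(x - v))) := by
    rw [hrw]; exact heq (-T₂) (by linarith)
  have h0 : h x = φ 0 := by rw [heq 0 (by norm_num)]; norm_num
  have hseg0 : (0:ℝ) ∈ segment ℝ (-T₂) T₁ := by
    rw [segment_eq_Icc (by linarith)]
    constructor <;> [linarith; linarith]
  have hmax : φ 0 ≤ max (φ (-T₂)) (φ T₁) :=
    hφ.le_on_segment (mem_univ _) (mem_univ _) hseg0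
  have hv₁ : h (x + T₁ • (x - v)) ≤ 0 := hfr _ hq₁cl hq₁ns
  have hv₂ : h (x + T₂ • (-(x - v))) ≤ 0 := hfr _ hq₂cl hq₂ns
  rw [h0]
  rcases max_cases (φ (-T₂)) (φ T₁) with ⟨hm, _⟩ | ⟨hm, _⟩ <;> rw [hm] at hmax
  · rw [e₂] at hmax; linarith
  · rw [e₁] at hmax; linarith
variable {F : Type*} [NormedAddCommGroup F] [InnerProductSpace ℝ F]

/-- Master cone-comparison lemma: a function of the form
`β‖·-z‖ + δ‖·-x₀‖ + ⟪p,·⟫ + γ` which is `≤ 0` on `frontier (W \ {x₀})`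
is `≤ 0` on `W`, provided `z ∉ W` and not both cone slopes are negative unless `p = 0`. -/
lemma master_cone [Nontrivial F] {W : Set F} (hWo : IsOpen W) (hWb : IsBounded W)
    {z : F} (x₀ : F) (hz : z ∉ W) (β δ γ : ℝ) (p : F)
    (hsign : 0 ≤ β ∨ 0 ≤ δ ∨ p = 0)
    (hyp : ∀ q ∈ frontier (W \ {x₀}),
      β * ‖q - z‖ + δ * ‖q - x₀‖ + ⟪p, q⟫ + γ ≤ 0) :
    ∀ x ∈ W, β * ‖x - z‖ + δ * ‖x - x₀‖ + ⟪p, x⟫ + γ ≤ 0 := by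
  intro x hx
  set h : F → ℝ := fun q => β * ‖q - z‖ + δ * ‖q - x₀‖ + ⟪p, q⟫ + γ with hh
  show h x ≤ 0
  by_cases hxx : x = x₀
  · subst hxx
    exact hyp x (mem_frontier_diff_singleton_self hWo hx)
  set S := W \ {x₀} with hS
  have hSo : IsOpen S := hWo.sdiff isClosed_singleton
  have hSb : IsBounded S := hWb.subset diff_subset
  have hxS : x ∈ S := ⟨hx, hxx⟩
  have hfr : ∀ q, q ∈ closure S → q ∉ S → h q ≤ 0 := by
    intro q h1 h2
    apply hyp
    rw [frontier_diff_singleton hWo x₀]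
    exact ⟨closure_mono diff_subset h1, h2⟩
  have hzS : z ∉ S := fun hzmem => hz hzmem.1
  have hx₀S : x₀ ∉ S := fun hmem => hmem.2 rfl
  by_cases hδ : 0 ≤ δ
  · -- convex along the line through z and x
    set φ : ℝ → ℝ := fun t => δ • ‖(x - x₀) + t • (x - z)‖ +
      ((β * ‖x - z‖ + ⟪p, x - z⟫) * t + (β * ‖x - z‖ + ⟪p, x⟫ + γ)) with hφdef
    have hφ : ConvexOn ℝ Set.univ φ :=
      ((convexOn_norm_affine (x - x₀) (x - z)).smul hδ).add (convexOn_affine _ _)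
    have heq : ∀ t : ℝ, -1 ≤ t → φ t = h (x + t • (x - z)) := by
      intro t ht
      have e1 : x + t • (x - z) - z = (1 + t) • (x - z) := by module
      have e2 : x + t • (x - z) - x₀ = (x - x₀) + t • (x - z) := by module
      have e3 : ⟪p, x + t • (x - z)⟫ = ⟪p, x⟫ + t * ⟪p, x - z⟫ := by
        rw [inner_add_right, real_inner_smul_right]
      simp only [hh, hφdef, e1, e2, e3, norm_smul, Real.norm_eq_abs,
        abs_of_nonneg (by linarith : (0:ℝ) ≤ 1 + t), smul_eq_mul]
      ring
    exact le_zero_of_convex_line hSo hSb hxS hzS hfr φ hφ heq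
  · push_neg at hδ
    by_cases hβ : 0 ≤ β
    · -- convex along the line through x₀ and x
      set φ : ℝ → ℝ := fun t => β • ‖(x - z) + t • (x - x₀)‖ +
        ((δ * ‖x - x₀‖ + ⟪p, x - x₀⟫) * t + (δ * ‖x - x₀‖ + ⟪p, x⟫ + γ)) with hφdef
      have hφ : ConvexOn ℝ Set.univ φ :=
        ((convexOn_norm_affine (x - z) (x - x₀)).smul hβ).add (convexOn_affine _ _)
      have heq : ∀ t : ℝ, -1 ≤ t → φ t = h (x + t • (x - x₀)) := by
        intro t ht
        have e1 : x + t • (x - x₀) - x₀ = (1 + t) • (x - x₀) := by module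
        have e2 : x + t • (x - x₀) - z = (x - z) + t • (x - x₀) := by module
        have e3 : ⟪p, x + t • (x - x₀)⟫ = ⟪p, x⟫ + t * ⟪p, x - x₀⟫ := by
          rw [inner_add_right, real_inner_smul_right]
        simp only [hh, hφdef, e1, e2, e3, norm_smul, Real.norm_eq_abs,
          abs_of_nonneg (by linarith : (0:ℝ) ≤ 1 + t), smul_eq_mul]
        ring
      exact le_zero_of_convex_line hSo hSb hxS hx₀S hfr φ hφ heq
    · push_neg at hβ
      have hp : p = 0 := by
        rcases hsign with h1 | h2 | h3
        · exact absurd h1 (not_le.2 hβ)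
        · exact absurd h2 (not_le.2 hδ)
        · exact h3
      subst hp
      have hinner : ∀ q : F, ⟪(0:F), q⟫ = 0 := fun q => inner_zero_left q
      rcases le_total β δ with hβδ | hδβ
      · -- walk toward z
        obtain ⟨q, hqcl, hqns, hnorm⟩ := walk_exit hSo hxS hzS
        have tri : ‖q - x₀‖ ≤ ‖x - x₀‖ + ‖x - q‖ := by
          have := norm_add_le (x - x₀) (q - x)
          have e : (x - x₀) + (q - x) = q - x₀ := by module
          rw [e, norm_sub_rev q x] at this
          linarith
        have hA : (0:ℝ) ≤ ‖x - q‖ := norm_nonneg _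
        have h1 : β * ‖q - z‖ = β * ‖x - z‖ - β * ‖x - q‖ := by
          have : ‖q - z‖ = ‖x - z‖ - ‖x - q‖ := by linarith [hnorm]
          rw [this]; ring
        have h2 : δ * (‖x - x₀‖ + ‖x - q‖) ≤ δ * ‖q - x₀‖ :=
          mul_le_mul_of_nonpos_left tri (le_of_lt hδ)
        have h3 : 0 ≤ (δ - β) * ‖x - q‖ := mul_nonneg (by linarith) hA
        have hq0 : h q ≤ 0 := hfr q hqcl hqns
        simp only [hh, hinner] at hq0 ⊢
        nlinarith [hq0, h1, h2, h3]
      · -- walk toward x₀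
        obtain ⟨q, hqcl, hqns, hnorm⟩ := walk_exit hSo hxS hx₀S
        have tri : ‖q - z‖ ≤ ‖x - z‖ + ‖x - q‖ := by
          have := norm_add_le (x - z) (q - x)
          have e : (x - z) + (q - x) = q - z := by module
          rw [e, norm_sub_rev q x] at this
          linarith
        have hA : (0:ℝ) ≤ ‖x - q‖ := norm_nonneg _
        have h1 : δ * ‖q - x₀‖ = δ * ‖x - x₀‖ - δ * ‖x - q‖ := by
          have : ‖q - x₀‖ = ‖x - x₀‖ - ‖x - q‖ := by linarith [hnorm]
          rw [this]; ring
        have h2 : β * (‖x - z‖ + ‖x - q‖) ≤ β * ‖q - z‖ :=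
          mul_le_mul_of_nonpos_left tri (le_of_lt hβ)
        have h3 : 0 ≤ (β - δ) * ‖x - q‖ := mul_nonneg (by linarith) hA
        have hq0 : h q ≤ 0 := hfr q hqcl hqns
        simp only [hh, hinner] at hq0 ⊢
        nlinarith [hq0, h1, h2, h3]

lemma exists_not_mem_of_isBounded [Nontrivial E] {W : Set E} (hWb : IsBounded W) :
    ∃ z : E, z ∉ W := by
  obtain ⟨R, hR⟩ := hWb.subset_ball 0
  obtain ⟨v, hv⟩ := exists_ne (0 : E)
  refine ⟨((|R| + 1) / ‖v‖) • v, fun hmem => ?_⟩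
  have := hR hmem
  rw [mem_ball, dist_zero_right, norm_smul, Real.norm_eq_abs,
    abs_of_nonneg (by positivity), div_mul_cancel₀ _ (norm_ne_zero_iff.2 hv)] at this
  have := le_abs_self R
  linarith

lemma cmpAbove_sSup {n : ℕ} (Ω : Set (Euc n)) (Fam : Set (Euc n → ℝ)) (hne : Fam.Nonempty)
    (hbd : ∀ x : Euc n, BddAbove ((fun v => v x) '' Fam))
    (hF : ∀ v ∈ Fam, CmpAbove Ω v) :
    CmpAbove Ω (fun x => sSup ((fun v => v x) '' Fam)) := by
  intro V hVo hVb hVc x₀ a b hyp x hx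
  apply csSup_le (hne.image _)
  rintro _ ⟨v, hv, rfl⟩
  refine hF v hv V hVo hVb hVc x₀ a b ?_ x hx
  intro q hq
  exact le_trans (le_csSup (hbd q) ⟨v, hv, rfl⟩) (hyp q hq)

lemma cone_cmpAbove {n : ℕ} [Nontrivial (Euc n)] {Ω : Set (Euc n)} {y : Euc n}
    (hy : y ∉ Ω) (c L : ℝ) : CmpAbove Ω (fun x => c + L * ‖x - y‖) := by
  intro V hVo hVb hVc x₀ a' b' hyp x hx
  have hyV : y ∉ V := fun hm => hy (hVc (subset_closure hm))
  have := master_cone hVo hVb x₀ hyV L (-a') (c - b') 0 (Or.inr (Or.inr rfl))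
    (fun q hq => by
      have h1 := hyp q hq
      dsimp only at h1
      have h2 : ⟪(0 : Euc n), q⟫ = 0 := inner_zero_left q
      rw [h2]; linarith) x hx
  have h2 : ⟪(0 : Euc n), x⟫ = 0 := inner_zero_left x
  rw [h2] at this; dsimp only; linarith

lemma cone_cmpBelow {n : ℕ} [Nontrivial (Euc n)] {Ω : Set (Euc n)} {y : Euc n}
    (hy : y ∉ Ω) (c L : ℝ) : CmpBelow Ω (fun x => c + L * ‖x - y‖) := by
  intro V hVo hVb hVc x₀ a' b' hyp x hx
  have hyV : y ∉ V := fun hm => hy (hVc (subset_closure hm))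
  have := master_cone hVo hVb x₀ hyV (-L) a' (b' - c) 0 (Or.inr (Or.inr rfl))
    (fun q hq => by
      have h1 := hyp q hq
      dsimp only at h1
      have h2 : ⟪(0 : Euc n), q⟫ = 0 := inner_zero_left q
      rw [h2]; linarith) x hx
  have h2 : ⟪(0 : Euc n), x⟫ = 0 := inner_zero_left x
  rw [h2] at this; dsimp only; linarith

lemma plane_cmpAbove {n : ℕ} [Nontrivial (Euc n)] (Ω : Set (Euc n)) (p : Euc n) (c : ℝ) :
    CmpAbove Ω (fun x => c + ⟪p, x⟫) := by
  intro V hVo hVb hVc x₀ a' b' hyp x hx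
  obtain ⟨z, hz⟩ := exists_not_mem_of_isBounded hVb
  have := master_cone hVo hVb x₀ hz 0 (-a') (c - b') p (Or.inl le_rfl)
    (fun q hq => by have h1 := hyp q hq; dsimp only at h1; linarith) x hx
  dsimp only; linarith

lemma plane_cmpBelow {n : ℕ} [Nontrivial (Euc n)] (Ω : Set (Euc n)) (p : Euc n) (c : ℝ) :
    CmpBelow Ω (fun x => c + ⟪p, x⟫) := by
  intro V hVo hVb hVc x₀ a' b' hyp x hx
  obtain ⟨z, hz⟩ := exists_not_mem_of_isBounded hVb
  have := master_cone hVo hVb x₀ hz 0 a' (b' - c) (-p) (Or.inl le_rfl)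
    (fun q hq => by
      have h1 := hyp q hq
      dsimp only at h1
      have h2 : ⟪-p, q⟫ = -⟪p, q⟫ := by
        rw [inner_neg_left]
      rw [h2]; linarith) x hx
  have h2 : ⟪-p, x⟫ = -⟪p, x⟫ := by rw [inner_neg_left]
  rw [h2] at this; dsimp only; linarith

set_option maxHeartbeats 2000000 in
/-- Theorem 2(ii): for any boundary data g and any a ≠ 0 there is an exterior
infinity harmonic function with u = g on ∂Ω and c⁻ + a·x ≤ u ≤ c⁺ + a·x in Ω. -/
theorem stmt14 {n : ℕ} (A : Set (Euc n)) (hAcl : IsClosed A) (hAbd : IsBounded A)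
    (h0A : (0 : Euc n) ∈ A) (hA1 : A ⊆ ball 0 1)
    (g : Euc n → ℝ) (hg : ContinuousOn g (frontier Aᶜ))
    (a : Euc n) (ha : 0 < ‖a‖) :
    ∃ u : Euc n → ℝ, ContinuousOn u (closure Aᶜ) ∧ InfHarmonic Aᶜ u ∧
      (∀ x ∈ frontier Aᶜ, u x = g x) ∧
      ∀ x ∈ Aᶜ,
        sInf ((fun y => g y - ⟪a, y⟫) '' frontier Aᶜ) + ⟪a, x⟫ ≤ u x ∧
        u x ≤ sSup ((fun y => g y - ⟪a, y⟫) '' frontier Aᶜ) + ⟪a, x⟫ := by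
  classical
  have hane : a ≠ 0 := by
    intro h; rw [h, norm_zero] at ha; exact lt_irrefl 0 ha
  haveI : Nontrivial (Euc n) := ⟨a, 0, hane⟩
  have hΩo : IsOpen Aᶜ := hAcl.isOpen_compl
  have hFrΩ : ∀ y ∈ frontier Aᶜ, y ∉ Aᶜ := by
    intro y hy
    rw [hΩo.frontier_eq] at hy
    exact hy.2
  have hFrcpt : IsCompact (frontier Aᶜ) := by
    rw [frontier_compl]
    exact (isCompact_of_isClosed_isBounded hAcl hAbd).of_isClosed_subset
      isClosed_frontier hAcl.frontier_subset
  have hFrne : (frontier Aᶜ).Nonempty := by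
    rw [frontier_compl]
    by_contra hemp
    rw [not_nonempty_iff_eq_empty] at hemp
    have hopen : IsOpen A := by
      rw [← interior_eq_iff_isOpen]
      apply Subset.antisymm interior_subset
      intro x hx
      by_contra hni
      have : x ∈ frontier A := ⟨subset_closure hx, hni⟩
      rw [hemp] at this
      exact this
    haveI : PreconnectedSpace (Euc n) :=
      ⟨(convex_univ : Convex ℝ (univ : Set (Euc n))).isPreconnected⟩
    rcases isClopen_iff.mp ⟨hAcl, hopen⟩ with h | h
    · rw [h] at h0A; exact h0A
    · have hmem : (2 / ‖a‖) • a ∈ A := by rw [h]; trivial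
      have := hA1 hmem
      rw [mem_ball, dist_zero_right, norm_smul, Real.norm_eq_abs,
        abs_of_nonneg (by positivity), div_mul_cancel₀ _ (ne_of_gt ha)] at this
      norm_num at this
  set cP := sSup ((fun y => g y - ⟪a, y⟫) '' frontier Aᶜ) with hcPdef
  set cM := sInf ((fun y => g y - ⟪a, y⟫) '' frontier Aᶜ) with hcMdef
  have hGcont : ContinuousOn (fun y : Euc n => g y - ⟪a, y⟫) (frontier Aᶜ) :=
    hg.sub ((continuous_const.inner continuous_id).continuousOn)
  have hGcpt : IsCompact ((fun y : Euc n => g y - ⟪a, y⟫) '' frontier Aᶜ) :=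
    hFrcpt.image_of_continuousOn hGcont
  have hGne : ((fun y : Euc n => g y - ⟪a, y⟫) '' frontier Aᶜ).Nonempty := hFrne.image _
  have hcM_le : ∀ y ∈ frontier Aᶜ, cM ≤ g y - ⟪a, y⟫ := fun y hy =>
    csInf_le hGcpt.bddBelow ⟨y, hy, rfl⟩
  have hle_cP : ∀ y ∈ frontier Aᶜ, g y - ⟪a, y⟫ ≤ cP := fun y hy =>
    le_csSup hGcpt.bddAbove ⟨y, hy, rfl⟩
  have hcMcP : cM ≤ cP := csInf_le_csSup hGne hGcpt.bddBelow hGcpt.bddAbove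
  obtain ⟨Cg, hCg⟩ := hFrcpt.exists_bound_of_continuousOn hg
  -- barrier slopes
  have hbar : ∀ y ∈ frontier Aᶜ, ∀ ε : ℝ, 0 < ε →
      ∃ L : ℝ, ‖a‖ ≤ L ∧ ∀ x ∈ frontier Aᶜ, |g x - g y| ≤ ε + L * ‖x - y‖ := by
    intro y hy ε hε
    have hc := hg y hy
    rw [Metric.continuousWithinAt_iff] at hc
    obtain ⟨δ, hδpos, hδ⟩ := hc ε hε
    have hCg0 : 0 ≤ Cg := le_trans (norm_nonneg _) (hCg y hy)
    refine ⟨max ‖a‖ (2 * Cg / δ), le_max_left _ _, ?_⟩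
    intro x hx
    by_cases hdx : dist x y < δ
    · have h1 := hδ hx hdx
      rw [Real.dist_eq] at h1
      have h2 : 0 ≤ max ‖a‖ (2 * Cg / δ) * ‖x - y‖ :=
        mul_nonneg (le_trans (norm_nonneg a) (le_max_left _ _)) (norm_nonneg _)
      linarith
    · push_neg at hdx
      rw [dist_eq_norm] at hdx
      have h1 : |g x - g y| ≤ 2 * Cg := by
        calc |g x - g y| ≤ |g x| + |g y| := abs_sub _ _
          _ ≤ Cg + Cg := add_le_add (hCg x hx) (hCg y hy)
          _ = 2 * Cg := by ring
      have h2 : 2 * Cg / δ * δ ≤ max ‖a‖ (2 * Cg / δ) * ‖x - y‖ := by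
        apply mul_le_mul (le_max_right _ _) hdx (le_of_lt hδpos)
        exact le_trans (norm_nonneg a) (le_max_left _ _)
      rw [div_mul_cancel₀ _ (ne_of_gt hδpos)] at h2
      linarith
  -- the two barrier families
  set planeP : Euc n → ℝ := fun x => cP + ⟪a, x⟫ with hplaneP
  set planeM : Euc n → ℝ := fun x => cM + ⟪a, x⟫ with hplaneM
  set UB : Set (Euc n → ℝ) := {f | f = planeP ∨ ∃ y, y ∈ frontier Aᶜ ∧ ∃ ε L : ℝ,
    0 < ε ∧ ‖a‖ ≤ L ∧ (∀ x ∈ frontier Aᶜ, |g x - g y| ≤ ε + L * ‖x - y‖) ∧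
    f = fun x => (g y + ε) + L * ‖x - y‖} with hUBdef
  set LB : Set (Euc n → ℝ) := {f | f = planeM ∨ ∃ y, y ∈ frontier Aᶜ ∧ ∃ ε L : ℝ,
    0 < ε ∧ ‖a‖ ≤ L ∧ (∀ x ∈ frontier Aᶜ, |g x - g y| ≤ ε + L * ‖x - y‖) ∧
    f = fun x => (g y - ε) + (-L) * ‖x - y‖} with hLBdef
  have hinner_diff : ∀ x y' : Euc n, ⟪a, x⟫ - ⟪a, y'⟫ ≤ ‖a‖ * ‖x - y'‖ := by
    intro x y'
    have h2 : ⟪a, x⟫ - ⟪a, y'⟫ = ⟪a, x - y'⟫ := (inner_sub_right a x y').symm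
    rw [h2]
    exact real_inner_le_norm a _
  have hcross : ∀ f1 ∈ LB, ∀ f2 ∈ UB, ∀ x : Euc n, f1 x ≤ f2 x := by
    rintro f1 (rfl | ⟨y, hy, ε, L, hε, hL, hb, rfl⟩) f2
        (rfl | ⟨y', hy', ε', L', hε', hL', hb', rfl⟩) x
    · rw [hplaneM, hplaneP]; dsimp only; linarith
    · rw [hplaneM]
      dsimp only
      have h1 : cM ≤ g y' - ⟪a, y'⟫ := hcM_le y' hy'
      have h3 := hinner_diff x y'
      have h4 : ‖a‖ * ‖x - y'‖ ≤ L' * ‖x - y'‖ :=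
        mul_le_mul_of_nonneg_right hL' (norm_nonneg _)
      linarith
    · rw [hplaneP]
      dsimp only
      have h1 : g y - ⟪a, y⟫ ≤ cP := hle_cP y hy
      have h3 := hinner_diff y x
      have h4 : ‖a‖ * ‖y - x‖ ≤ L * ‖y - x‖ :=
        mul_le_mul_of_nonneg_right hL (norm_nonneg _)
      rw [norm_sub_rev y x] at h3 h4
      linarith
    · dsimp only
      have hL0 : 0 ≤ L := le_trans (norm_nonneg a) hL
      have hL'0 : 0 ≤ L' := le_trans (norm_nonneg a) hL'
      have tri : ‖y' - y‖ ≤ ‖x - y‖ + ‖x - y'‖ := by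
        have h := norm_add_le (y' - x) (x - y)
        have e : (y' - x) + (x - y) = y' - y := by module
        rw [e, norm_sub_rev y' x] at h
        linarith
      rcases le_total L L' with hLL | hLL
      · have h1 : g y - g y' ≤ ε + L * ‖y' - y‖ := by
          have := hb y' hy'
          have h2 := abs_le.mp this
          linarith [h2.1]
        have h5 : L * ‖y' - y‖ ≤ L * (‖x - y‖ + ‖x - y'‖) :=
          mul_le_mul_of_nonneg_left tri hL0
        have h6 : L * ‖x - y'‖ ≤ L' * ‖x - y'‖ :=
          mul_le_mul_of_nonneg_right hLL (norm_nonneg _)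
        nlinarith
      · have h1 : g y - g y' ≤ ε' + L' * ‖y - y'‖ := by
          have := hb' y hy
          have h2 := abs_le.mp this
          linarith [h2.2]
        have tri' : ‖y - y'‖ ≤ ‖x - y‖ + ‖x - y'‖ := by
          rw [norm_sub_rev]; linarith
        have h5 : L' * ‖y - y'‖ ≤ L' * (‖x - y‖ + ‖x - y'‖) :=
          mul_le_mul_of_nonneg_left tri' hL'0
        have h6 : L' * ‖x - y‖ ≤ L * ‖x - y‖ :=
          mul_le_mul_of_nonneg_right hLL (norm_nonneg _)
        nlinarith
  have hLB_cwca : ∀ f ∈ LB, CmpAbove Aᶜ f := by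
    rintro f (rfl | ⟨y, hy, ε, L, hε, hL, hb, rfl⟩)
    · rw [hplaneM]; exact plane_cmpAbove Aᶜ a cM
    · exact cone_cmpAbove (hFrΩ y hy) (g y - ε) (-L)
  have hUB_cwcb : ∀ f ∈ UB, CmpBelow Aᶜ f := by
    rintro f (rfl | ⟨y, hy, ε, L, hε, hL, hb, rfl⟩)
    · rw [hplaneP]; exact plane_cmpBelow Aᶜ a cP
    · exact cone_cmpBelow (hFrΩ y hy) (g y + ε) L
  -- the envelopes
  set Φ : Euc n → ℝ := fun x => sInf ((fun f => f x) '' UB) with hΦdef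
  set Φm : Euc n → ℝ := fun x => sSup ((fun f => f x) '' LB) with hΦmdef
  have hplaneP_UB : planeP ∈ UB := Or.inl rfl
  have hplaneM_LB : planeM ∈ LB := Or.inl rfl
  have hUBbdd : ∀ x : Euc n, BddBelow ((fun f => f x) '' UB) := by
    intro x
    refine ⟨planeM x, ?_⟩
    rintro _ ⟨f, hf, rfl⟩
    exact hcross _ hplaneM_LB _ hf x
  have hLBbdd : ∀ x : Euc n, BddAbove ((fun f => f x) '' LB) := by
    intro x
    refine ⟨planeP x, ?_⟩
    rintro _ ⟨f, hf, rfl⟩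
    exact hcross _ hf _ hplaneP_UB x
  have hΦ_le : ∀ f ∈ UB, ∀ x : Euc n, Φ x ≤ f x := fun f hf x =>
    csInf_le (hUBbdd x) ⟨f, hf, rfl⟩
  have hΦm_ge : ∀ f ∈ LB, ∀ x : Euc n, f x ≤ Φm x := fun f hf x =>
    le_csSup (hLBbdd x) ⟨f, hf, rfl⟩
  have hLBne : ∀ x : Euc n, ((fun f => f x) '' LB).Nonempty :=
    fun x => ⟨planeM x, planeM, hplaneM_LB, rfl⟩
  have hUBne : ∀ x : Euc n, ((fun f => f x) '' UB).Nonempty :=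
    fun x => ⟨planeP x, planeP, hplaneP_UB, rfl⟩
  have hΦmΦ : ∀ x : Euc n, Φm x ≤ Φ x := by
    intro x
    apply csSup_le (hLBne x)
    rintro _ ⟨f, hf, rfl⟩
    apply le_csInf (hUBne x)
    rintro _ ⟨f', hf', rfl⟩
    exact hcross _ hf _ hf' x
  have hΦm_cwca : CmpAbove Aᶜ Φm :=
    cmpAbove_sSup Aᶜ LB ⟨planeM, hplaneM_LB⟩ hLBbdd hLB_cwca
  -- the Perron family
  set Fam : Set (Euc n → ℝ) :=
    {v | CmpAbove Aᶜ v ∧ ∀ x : Euc n, Φm x ≤ v x ∧ v x ≤ Φ x} with hFamdef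
  have hΦmFam : Φm ∈ Fam := ⟨hΦm_cwca, fun x => ⟨le_rfl, hΦmΦ x⟩⟩
  set u : Euc n → ℝ := fun x => sSup ((fun v => v x) '' Fam) with hudef
  have hFambdd : ∀ x : Euc n, BddAbove ((fun v => v x) '' Fam) := by
    intro x
    refine ⟨Φ x, ?_⟩
    rintro _ ⟨v, hv, rfl⟩
    exact (hv.2 x).2
  have hu_cwca : CmpAbove Aᶜ u :=
    cmpAbove_sSup Aᶜ Fam ⟨Φm, hΦmFam⟩ hFambdd (fun v hv => hv.1)
  have hu_lb : ∀ x : Euc n, Φm x ≤ u x := fun x => le_csSup (hFambdd x) ⟨Φm, hΦmFam, rfl⟩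
  have hu_ub : ∀ x : Euc n, u x ≤ Φ x := by
    intro x
    have hne : ((fun v => v x) '' Fam).Nonempty := ⟨Φm x, Φm, hΦmFam, rfl⟩
    apply csSup_le hne
    rintro _ ⟨v, hv, rfl⟩
    exact (hv.2 x).2
  have hv_le_u : ∀ v ∈ Fam, ∀ x : Euc n, v x ≤ u x := fun v hv x =>
    le_csSup (hFambdd x) ⟨v, hv, rfl⟩
  -- boundary values
  have hΦ_bd : ∀ q ∈ frontier Aᶜ, Φ q = g q := by
    intro q hq
    refine le_antisymm ?_ ?_
    · apply le_of_forall_pos_le_add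
      intro ε hε
      obtain ⟨L, hL, hbp⟩ := hbar q hq ε hε
      have hmem : (fun x => (g q + ε) + L * ‖x - q‖) ∈ UB := Or.inr ⟨q, hq, ε, L, hε, hL, hbp, rfl⟩
      have h1 := hΦ_le _ hmem q
      rw [sub_self, norm_zero, mul_zero, add_zero] at h1
      linarith
    · apply le_csInf (hUBne q)
      rintro _ ⟨f, hf, rfl⟩
      rcases hf with rfl | ⟨y', hy', ε', L', hε', hL', hb', rfl⟩
      · rw [hplaneP]; dsimp only
        have := hle_cP q hq; linarith
      · have h1 := hb' q hq
        have h2 := le_abs_self (g q - g y')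
        dsimp only
        linarith
  have hΦm_bd : ∀ q ∈ frontier Aᶜ, Φm q = g q := by
    intro q hq
    refine le_antisymm ?_ ?_
    · apply csSup_le (hLBne q)
      rintro _ ⟨f, hf, rfl⟩
      rcases hf with rfl | ⟨y', hy', ε', L', hε', hL', hb', rfl⟩
      · rw [hplaneM]; dsimp only
        have := hcM_le q hq; linarith
      · have h1 := hb' q hq
        have h2 : g y' - g q ≤ |g q - g y'| := by
          rw [abs_sub_comm]; exact le_abs_self _
        dsimp only
        nlinarith
    · apply le_of_forall_pos_le_add
      intro ε hε
      obtain ⟨L, hL, hbp⟩ := hbar q hq ε hε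
      have hmem : (fun x => (g q - ε) + (-L) * ‖x - q‖) ∈ LB :=
        Or.inr ⟨q, hq, ε, L, hε, hL, hbp, rfl⟩
      have h1 := hΦm_ge _ hmem q
      rw [sub_self, norm_zero, mul_zero, add_zero] at h1
      linarith
  have hu_bd : ∀ q ∈ frontier Aᶜ, u q = g q := by
    intro q hq
    refine le_antisymm ?_ ?_
    · rw [← hΦ_bd q hq]; exact hu_ub q
    · rw [← hΦm_bd q hq]; exact hu_lb q
  -- interior local Lipschitz continuity
  have hu_cont : ∀ x₀ ∈ Aᶜ, ContinuousAt u x₀ := by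
    intro x₀ hx₀
    obtain ⟨ρ, hρpos, hρ⟩ := Metric.isOpen_iff.mp hΩo x₀ hx₀
    set M : ℝ := cP + ‖a‖ * (‖x₀‖ + ρ) with hM
    set m : ℝ := cM - ‖a‖ * (‖x₀‖ + ρ) with hm
    have hball_norm : ∀ q : Euc n, q ∈ closedBall x₀ ρ → ‖q‖ ≤ ‖x₀‖ + ρ := by
      intro q hq
      rw [mem_closedBall, dist_eq_norm] at hq
      have h1 : ‖q‖ ≤ ‖x₀‖ + ‖q - x₀‖ := by
        have := norm_add_le x₀ (q - x₀)
        have e : x₀ + (q - x₀) = q := by module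
        rw [e] at this; exact this
      linarith
    have hΦM : ∀ q ∈ closedBall x₀ ρ, Φ q ≤ M := by
      intro q hq
      have h1 := hΦ_le planeP hplaneP_UB q
      rw [hplaneP] at h1
      have h2 : ⟪a, q⟫ ≤ ‖a‖ * ‖q‖ := real_inner_le_norm a q
      have h3 : ‖a‖ * ‖q‖ ≤ ‖a‖ * (‖x₀‖ + ρ) :=
        mul_le_mul_of_nonneg_left (hball_norm q hq) (norm_nonneg a)
      rw [hM]; dsimp only at h1 ⊢; linarith
    have hΦmm : ∀ q ∈ closedBall x₀ ρ, m ≤ Φm q := by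
      intro q hq
      have h1 := hΦm_ge planeM hplaneM_LB q
      rw [hplaneM] at h1
      have h2 : -⟪a, q⟫ ≤ ‖a‖ * ‖q‖ := by
        have := real_inner_le_norm a (-q)
        rw [inner_neg_right, norm_neg] at this
        linarith
      have h3 : ‖a‖ * ‖q‖ ≤ ‖a‖ * (‖x₀‖ + ρ) :=
        mul_le_mul_of_nonneg_left (hball_norm q hq) (norm_nonneg a)
      rw [hm]; dsimp only at h1 ⊢; linarith
    set K : ℝ := (M - m) / (ρ / 3) with hK
    have hρ3 : (0:ℝ) < ρ / 3 := by linarith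
    have hMm : m ≤ M := by
      have h1 := hΦmm x₀ (mem_closedBall_self (le_of_lt hρpos))
      have h2 := hΦM x₀ (mem_closedBall_self (le_of_lt hρpos))
      linarith [hΦmΦ x₀]
    have hK0 : 0 ≤ K := div_nonneg (by linarith) (le_of_lt hρ3)
    have key : ∀ x ∈ ball x₀ (ρ/3), ∀ y ∈ ball x (ρ/3), u y ≤ u x + K * ‖y - x‖ := by
      intro x hx y hy
      have hxcb : ∀ q ∈ closedBall x (ρ/3), q ∈ closedBall x₀ ρ := by
        intro q hq
        rw [mem_closedBall] at hq ⊢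
        rw [mem_ball] at hx
        calc dist q x₀ ≤ dist q x + dist x x₀ := dist_triangle _ _ _
          _ ≤ ρ/3 + ρ/3 := add_le_add hq (le_of_lt hx)
          _ ≤ ρ := by linarith
      have hclos : closure (ball x (ρ/3)) ⊆ Aᶜ := by
        rw [closure_ball x (ne_of_gt hρ3)]
        intro q hq
        apply hρ
        rw [mem_ball]
        rw [mem_closedBall] at hq
        rw [mem_ball] at hx
        calc dist q x₀ ≤ dist q x + dist x x₀ := dist_triangle _ _ _
          _ < ρ/3 + ρ/3 := add_lt_add_of_le_of_lt hq hx
          _ < ρ := by linarith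
      have hperv : ∀ v ∈ Fam, v y ≤ v x + K * ‖y - x‖ := by
        intro v hv
        have hvxM : v x ≤ M := le_trans (hv.2 x).2
          (hΦM x (hxcb x (mem_closedBall_self (le_of_lt hρ3))))
        have hvxm : m ≤ v x := le_trans
          (hΦmm x (hxcb x (mem_closedBall_self (le_of_lt hρ3)))) (hv.2 x).1
        set s' : ℝ := (M - v x) / (ρ/3) with hs'
        have hs'K : s' ≤ K := by
          rw [hs', hK]
          apply div_le_div_of_nonneg_right ?_ (le_of_lt hρ3)
          linarith
        have hfr : ∀ p ∈ frontier (ball x (ρ/3) \ {x}), v p ≤ s' * ‖p - x‖ + v x := by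
          intro p hp
          rw [frontier_diff_singleton isOpen_ball x, closure_ball x (ne_of_gt hρ3)] at hp
          rcases eq_or_ne p x with rfl | hpx
          · rw [sub_self, norm_zero, mul_zero]; linarith
          · have hpnb : p ∉ ball x (ρ/3) := fun hmem => hp.2 ⟨hmem, hpx⟩
            have hpd : dist p x = ρ/3 := by
              have h1 : dist p x ≤ ρ/3 := mem_closedBall.mp hp.1
              have h2 : ρ/3 ≤ dist p x := not_lt.mp (fun hlt => hpnb (mem_ball.mpr hlt))
              exact le_antisymm h1 h2
            have hvp : v p ≤ M := le_trans (hv.2 p).2 (hΦM p (hxcb p hp.1))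
            have : s' * ‖p - x‖ = M - v x := by
              rw [← dist_eq_norm, hpd, hs', div_mul_cancel₀ _ (ne_of_gt hρ3)]
            linarith
        have := hv.1 (ball x (ρ/3)) isOpen_ball isBounded_ball hclos x s' (v x) hfr y hy
        have hs'n : s' * ‖y - x‖ ≤ K * ‖y - x‖ :=
          mul_le_mul_of_nonneg_right hs'K (norm_nonneg _)
        linarith
      have hne : ((fun v => v y) '' Fam).Nonempty := ⟨Φm y, Φm, hΦmFam, rfl⟩
      apply csSup_le hne
      rintro _ ⟨v, hv, rfl⟩
      exact le_trans (hperv v hv) (by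
        have := hv_le_u v hv x
        have h0 : 0 ≤ K * ‖y - x‖ := mul_nonneg hK0 (norm_nonneg _)
        linarith)
    rw [Metric.continuousAt_iff]
    intro ε hε
    refine ⟨min (ρ/3) (ε / (K + 1)), lt_min hρ3 (by positivity), ?_⟩
    intro y hyd
    have hy1 : y ∈ ball x₀ (ρ/3) := by
      rw [mem_ball]; exact lt_of_lt_of_le hyd (min_le_left _ _)
    have hx₀b : x₀ ∈ ball x₀ (ρ/3) := mem_ball_self hρ3
    have h1 := key x₀ hx₀b y hy1
    have h2 := key x₀ hx₀b x₀ hx₀b  -- dummy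
    have h3 : u x₀ ≤ u y + K * ‖x₀ - y‖ := by
      have hy2 : x₀ ∈ ball y (ρ/3) := by
        rw [mem_ball, dist_comm]
        exact lt_of_lt_of_le hyd (min_le_left _ _)
      have hy3 : y ∈ ball x₀ (ρ/3) := hy1
      exact key y hy3 x₀ hy2
    have hnd : ‖y - x₀‖ < ε / (K + 1) := by
      rw [← dist_eq_norm]
      exact lt_of_lt_of_le hyd (min_le_right _ _)
    have hnd' : ‖x₀ - y‖ < ε / (K + 1) := by rw [norm_sub_rev]; exact hnd
    rw [Real.dist_eq, abs_lt]
    have hKb : K * (ε / (K + 1)) < ε := by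
      rw [div_eq_inv_mul, ← mul_assoc]
      have h4 : K * (K + 1)⁻¹ < 1 := by
        rw [mul_inv_lt_iff₀ (by linarith : (0:ℝ) < K + 1)]
        linarith
      nlinarith
    constructor
    · have := mul_le_mul_of_nonneg_left (le_of_lt hnd') hK0
      nlinarith [mul_le_mul_of_nonneg_left (le_of_lt hnd') hK0]
    · nlinarith [mul_le_mul_of_nonneg_left (le_of_lt hnd) hK0]
  -- comparison with cones from below via the bump argument
  have hu_cwcb : CmpBelow Aᶜ u := by
    intro V hVo hVb hVcl z a₀ b₀ HC xh hxh
    by_contra hlt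
    rw [not_le] at hlt
    have hxhz : xh ≠ z := by
      intro h
      rw [h] at hlt hxh
      have hzV : z ∈ frontier (V \ {z}) := mem_frontier_diff_singleton_self hVo hxh
      have := HC z hzV
      linarith
    obtain ⟨C, hC⟩ : ∃ C : Euc n → ℝ, C = fun x => a₀ * ‖x - z‖ + b₀ := ⟨_, rfl⟩
    obtain ⟨w, hw⟩ : ∃ w : Euc n → ℝ,
        w = fun x => if x ∈ V \ {z} then max (u x) (C x) else u x := ⟨_, rfl⟩
    have hwu : ∀ x, u x ≤ w x := by
      intro x; rw [hw]; dsimp only; split_ifs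
      · exact le_max_left _ _
      · exact le_rfl
    have hwVz : ∀ x ∈ V \ {z}, w x = max (u x) (C x) := by
      intro x hx; rw [hw]; dsimp only; rw [if_pos hx]
    have hVzo : IsOpen (V \ {z}) := hVo.sdiff isClosed_singleton
    have hVzb : IsBounded (V \ {z}) := hVb.subset diff_subset
    have hzVz : z ∉ V \ {z} := fun h => h.2 rfl
    -- (1) w ≤ Φ on all points
    have hwΦ : ∀ x, w x ≤ Φ x := by
      intro x
      rw [hw]; dsimp only; split_ifs with hx
      · refine max_le (hu_ub x) ?_
        apply le_csInf (hUBne x)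
        rintro _ ⟨f, hf, rfl⟩
        rcases hf with rfl | ⟨y', hy', ε', L', hε', hL', hb', rfl⟩
        · -- plane case
          rw [hplaneP, hC]
          have hmc := master_cone hVzo hVzb z hzVz a₀ 0 (b₀ - cP) (-a)
            (Or.inr (Or.inl le_rfl)) ?_ x hx
          · have hax : ⟪-a, x⟫ = -⟪a, x⟫ := by rw [inner_neg_left]
            rw [hax] at hmc
            dsimp only
            linarith
          · intro q hq
            rw [diff_diff, union_self] at hq
            have h1 := HC q hq
            have h2 := le_trans (hu_ub q) (hΦ_le planeP hplaneP_UB q)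
            rw [hplaneP] at h2
            dsimp only at h2
            have hax : ⟪-a, q⟫ = -⟪a, q⟫ := by rw [inner_neg_left]
            rw [hax]
            linarith
        · -- cone case
          have hy'Vz : y' ∉ V \ {z} := fun hmem => hFrΩ y' hy' (hVcl (subset_closure hmem.1))
          have hmc := master_cone hVzo hVzb y' hzVz a₀ (-L') (b₀ - (g y' + ε')) (0 : Euc n)
            (Or.inr (Or.inr rfl)) ?_ x hx
          · have hax : ⟪(0 : Euc n), x⟫ = 0 := inner_zero_left x
            rw [hax] at hmc
            rw [hC]
            dsimp only
            linarith
          · intro q hq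
            rw [diff_singleton_eq_self hy'Vz] at hq
            have h1 := HC q hq
            have hmem : (fun x => (g y' + ε') + L' * ‖x - y'‖) ∈ UB :=
              Or.inr ⟨y', hy', ε', L', hε', hL', hb', rfl⟩
            have h2 := le_trans (hu_ub q) (hΦ_le _ hmem q)
            have hax : ⟪(0 : Euc n), q⟫ = 0 := inner_zero_left q
            rw [hax]
            linarith
      · exact hu_ub x
    -- (2) w satisfies comparison with cones from above
    have hw_cwca : CmpAbove Aᶜ w := by
      intro V' hV'o hV'b hV'cl x₀' a' b' Hw x hxV'
      have Hu : ∀ p ∈ frontier (V' \ {x₀'}), u p ≤ a' * ‖p - x₀'‖ + b' :=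
        fun p hp => le_trans (hwu p) (Hw p hp)
      have HuV' : ∀ x' ∈ V', u x' ≤ a' * ‖x' - x₀'‖ + b' :=
        hu_cwca V' hV'o hV'b hV'cl x₀' a' b' Hu
      have HuclV' : ∀ p ∈ closure V', u p ≤ a' * ‖p - x₀'‖ + b' := by
        intro p hp
        by_cases hpV' : p ∈ V'
        · exact HuV' p hpV'
        · refine Hu p ?_
          rw [frontier_diff_singleton hV'o x₀']
          exact ⟨hp, fun hmem => hpV' hmem.1⟩
      have hW''o : IsOpen (V' ∩ (V \ {z})) := hV'o.inter hVzo
      have hW''b : IsBounded (V' ∩ (V \ {z})) := hV'b.subset inter_subset_left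
      have hzW'' : z ∉ V' ∩ (V \ {z}) := fun h => h.2.2 rfl
      have HCW'' : ∀ x' ∈ V' ∩ (V \ {z}), C x' ≤ a' * ‖x' - x₀'‖ + b' := by
        have hmc := master_cone hW''o hW''b x₀' hzW'' a₀ (-a') (b₀ - b') (0 : Euc n)
          (Or.inr (Or.inr rfl)) ?_
        · intro x' hx'
          have h1 := hmc x' hx'
          have hax : ⟪(0 : Euc n), x'⟫ = 0 := inner_zero_left x'
          rw [hax] at h1
          rw [hC]; dsimp only
          linarith
        · intro p hp
          have hax : ⟪(0 : Euc n), p⟫ = 0 := inner_zero_left p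
          rw [hax]
          rw [frontier_diff_singleton hW''o x₀'] at hp
          have hpclV' : p ∈ closure V' := closure_mono inter_subset_left hp.1
          have hpclVz : p ∈ closure (V \ {z}) := closure_mono inter_subset_right hp.1
          have hCp_le : C p ≤ a' * ‖p - x₀'‖ + b' := by
            by_cases hp1 : p ∈ V \ {z}
            · have hCw : C p ≤ w p := by rw [hwVz p hp1]; exact le_max_right _ _
              by_cases hp2 : p ∈ V'
              · have hpW'' : p ∈ V' ∩ (V \ {z}) := ⟨hp2, hp1⟩
                have hpx₀ : p = x₀' := by
                  by_contra hne
                  exact hp.2 ⟨hpW'', hne⟩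
                have hx₀'fr : p ∈ frontier (V' \ {x₀'}) := by
                  rw [hpx₀] at hp2 ⊢
                  exact mem_frontier_diff_singleton_self hV'o hp2
                exact le_trans hCw (Hw p hx₀'fr)
              · have hpfrV' : p ∈ frontier (V' \ {x₀'}) := by
                  rw [frontier_diff_singleton hV'o x₀']
                  exact ⟨hpclV', fun hmem => hp2 hmem.1⟩
                exact le_trans hCw (Hw p hpfrV')
            · have hpfrVz : p ∈ frontier (V \ {z}) := by
                rw [frontier_diff_singleton hVo z]
                exact ⟨closure_mono diff_subset hpclVz, hp1⟩
              have h1 := le_trans (HC p hpfrVz) (HuclV' p hpclV')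
              rw [hC]
              exact h1
          rw [hC] at hCp_le; dsimp only at hCp_le
          linarith
      rw [hw]; dsimp only; split_ifs with hxVz
      · exact max_le (HuV' x hxV') (HCW'' x ⟨hxV', hxVz⟩)
      · exact HuV' x hxV'
    -- w belongs to the family, contradiction
    have hwFam : w ∈ Fam := ⟨hw_cwca, fun x => ⟨le_trans (hu_lb x) (hwu x), hwΦ x⟩⟩
    have hxhVz : xh ∈ V \ {z} := ⟨hxh, hxhz⟩
    have h1 : w xh ≤ u xh := hv_le_u w hwFam xh
    rw [hwVz xh hxhVz] at h1
    have h2 : C xh ≤ u xh := le_trans (le_max_right _ _) h1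
    rw [hC] at h2; dsimp only at h2
    linarith
  -- conclusion
  refine ⟨u, ?_, ⟨hu_cwca, hu_cwcb⟩, hu_bd, ?_⟩
  · intro q hq
    by_cases hqΩ : q ∈ Aᶜ
    · exact (hu_cont q hqΩ).continuousWithinAt
    · have hqfr : q ∈ frontier Aᶜ := by
        rw [hΩo.frontier_eq]
        exact ⟨hq, hqΩ⟩
      rw [Metric.continuousWithinAt_iff]
      intro ε hε
      obtain ⟨L, hL, hbp⟩ := hbar q hqfr (ε/4) (by linarith)
      have hLpos : 0 < L := lt_of_lt_of_le ha hL
      refine ⟨(ε/4) / L, by positivity, ?_⟩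
      intro x hxcl hxd
      have huq : u q = g q := hu_bd q hqfr
      have hup : u x ≤ (g q + ε/4) + L * ‖x - q‖ := by
        have hmem : (fun v => (g q + ε/4) + L * ‖v - q‖) ∈ UB :=
          Or.inr ⟨q, hqfr, ε/4, L, by linarith, hL, hbp, rfl⟩
        exact le_trans (hu_ub x) (hΦ_le _ hmem x)
      have hlo : (g q - ε/4) + (-L) * ‖x - q‖ ≤ u x := by
        have hmem : (fun v => (g q - ε/4) + (-L) * ‖v - q‖) ∈ LB :=
          Or.inr ⟨q, hqfr, ε/4, L, by linarith, hL, hbp, rfl⟩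
        exact le_trans (hΦm_ge _ hmem x) (hu_lb x)
      have hxq : ‖x - q‖ < (ε/4) / L := by rw [← dist_eq_norm]; exact hxd
      have hL4 : L * ‖x - q‖ < ε/4 := by
        rw [lt_div_iff₀ hLpos] at hxq
        linarith [mul_comm L ‖x - q‖]
      rw [Real.dist_eq, huq, abs_lt]
      constructor <;> nlinarith []
  · intro x hx
    constructor
    · exact le_trans (hΦm_ge planeM hplaneM_LB x) (hu_lb x)
    · exact le_trans (hu_ub x) (hΦ_le planeP hplaneP_UB x)
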